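/- arXiv:1110.4080 — 2 statements merged into one kernel-verified Lean document; each statement's English description precedes it below -/
import Mathlib

section
/- The saturated lexsegment ideal in K[x_0,...,x_n] whose quotient has a prescribed nonzero Hilbert polynomial p is unique: if L and L' are saturated lexsegment ideals with p_{R/L} = p_{R/L'} = p, then L = L'. -/
open MvPolynomial
open Fin.NatCast

noncomputable section

/-- The polynomial ring `K[x_0,…,x_n]` in `n+1` variables. -/
abbrev PR (K : Type*) [Field K] (n : ℕ) := MvPolynomial (Fin (n+1)) K

variable {K : Type*} [Field K] {n : ℕ}

/-- The monomial `x^A`. -/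
def mon (A : Fin (n+1) →₀ ℕ) : PR K n := monomial A 1

/-- Total degree of the monomial with exponent vector `A`. -/
def mdeg (A : Fin (n+1) →₀ ℕ) : ℕ := ∑ i, A i

/-- The largest index of a variable dividing `x^A` (0 if `A = 0`). -/
def maxIdx (A : Fin (n+1) →₀ ℕ) : Fin (n+1) := WithBot.unbotD 0 (A.support.max)

/-- The exponent vector of `(x_i / x_j) · x^A`. -/
def shiftM (A : Fin (n+1) →₀ ℕ) (i j : Fin (n+1)) : Fin (n+1) →₀ ℕ :=
  A + Finsupp.single i 1 - Finsupp.single j 1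

/-- `I` is a monomial ideal: generated by a set of monomials. -/
def IsMonomialIdeal (I : Ideal (PR K n)) : Prop :=
  ∃ S : Set (Fin (n+1) →₀ ℕ), I = Ideal.span ((fun A => (mon A : PR K n)) '' S)

/-- Strongly stable monomial ideal. -/
def StronglyStable (I : Ideal (PR K n)) : Prop :=
  ∀ A : Fin (n+1) →₀ ℕ, mon A ∈ I → ∀ i j : Fin (n+1), A j ≠ 0 → i < j →
    mon (shiftM A i j) ∈ I

/-- Stable monomial ideal. -/
def Stable (I : Ideal (PR K n)) : Prop :=
  ∀ A : Fin (n+1) →₀ ℕ, A ≠ 0 → mon A ∈ I → ∀ i : Fin (n+1), i < maxIdx A →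
    mon (shiftM A i (maxIdx A)) ∈ I

/-- `x^A` is a minimal monomial generator of `I`. -/
def MinGen (I : Ideal (PR K n)) (A : Fin (n+1) →₀ ℕ) : Prop :=
  mon A ∈ I ∧ ∀ B : Fin (n+1) →₀ ℕ, B ≤ A → B ≠ A → mon B ∉ I

/-- The set of exponent vectors of minimal monomial generators of `I`. -/
def Gens (I : Ideal (PR K n)) : Set (Fin (n+1) →₀ ℕ) := {A | MinGen I A}

/-- The irrelevant maximal ideal `(x_0,…,x_n)`. -/
def irrIdeal (K : Type*) [Field K] (n : ℕ) : Ideal (PR K n) :=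
  Ideal.span (Set.range fun i : Fin (n+1) => (X i : PR K n))

/-- `I` is saturated: `(I : (x_0,…,x_n)) = I`. -/
def Saturated (I : Ideal (PR K n)) : Prop :=
  Submodule.colon I (irrIdeal K n) = I

/-- The saturation `∪ₖ (I : (x_0,…,x_n)^k)`. -/
def saturationOf (I : Ideal (PR K n)) : Ideal (PR K n) :=
  ⨆ k : ℕ, Submodule.colon I (((irrIdeal K n) ^ k : Ideal (PR K n)) : Set (PR K n))

/-- The Hilbert function of `R/I`: `j ↦ dim_K [R/I]_j`. -/
def hilbF {σ : Type*} (I : Ideal (MvPolynomial σ K)) (j : ℕ) : ℕ :=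
  Module.finrank K
    ((homogeneousSubmodule σ K j).map (Ideal.Quotient.mkₐ K I).toLinearMap)

/-- `p` is the Hilbert polynomial of `R/I`. -/
def IsHilbPoly {σ : Type*} (I : Ideal (MvPolynomial σ K)) (p : Polynomial ℚ) : Prop :=
  ∃ N : ℕ, ∀ j : ℕ, N ≤ j → p.eval (j : ℚ) = (hilbF I j : ℚ)

/-- The binomial-coefficient polynomial `C(q, k) = q(q-1)⋯(q-k+1)/k!`. -/
def choosePoly (q : Polynomial ℚ) (k : ℕ) : Polynomial ℚ :=
  ((k.factorial : ℚ))⁻¹ • ∏ j ∈ Finset.range k, (q - Polynomial.C (j : ℚ))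

/-- The canonical representation `p(z) = Σ_{i=0}^d [C(z+i,i+1) − C(z+i−b_i,i+1)]`. -/
def canonicalHP (d : ℕ) (b : ℕ → ℕ) : Polynomial ℚ :=
  ∑ i ∈ Finset.range (d+1),
    (choosePoly (Polynomial.X + Polynomial.C (i : ℚ)) (i+1)
      - choosePoly (Polynomial.X + Polynomial.C (i : ℚ) - Polynomial.C (b i : ℚ)) (i+1))

/-- `x^A >_lex x^B`. -/
def LexGt (A B : Fin (n+1) →₀ ℕ) : Prop :=
  ∃ i : Fin (n+1), (∀ j : Fin (n+1), j < i → A j = B j) ∧ B i < A i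

/-- `I` is a lexsegment ideal. -/
def IsLexsegment (I : Ideal (PR K n)) : Prop :=
  IsMonomialIdeal I ∧ ∀ A B : Fin (n+1) →₀ ℕ, mdeg A = mdeg B → mon B ∈ I →
    LexGt A B → mon A ∈ I

/-- `I` is a homogeneous ideal. -/
def Homog (I : Ideal (PR K n)) : Prop :=
  ∀ f ∈ I, ∀ j : ℕ, homogeneousComponent j f ∈ I

/-- The set of right-shifts of `x^A`. -/
def rightShifts (A : Fin (n+1) →₀ ℕ) : Set (Fin (n+1) →₀ ℕ) :=
  {B | ∃ i : Fin (n+1), (i : ℕ) + 2 ≤ n ∧ A i ≠ 0 ∧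
    B = shiftM A ((((i : ℕ) + 1 : ℕ)) : Fin (n+1)) i}

/-- The set of left-shifts of `x^A`. -/
def leftShifts (A : Fin (n+1) →₀ ℕ) : Set (Fin (n+1) →₀ ℕ) :=
  {B | ∃ i : Fin (n+1), 1 ≤ (i : ℕ) ∧ (i : ℕ) + 1 ≤ n ∧ A i ≠ 0 ∧
    B = shiftM A ((((i : ℕ) - 1 : ℕ)) : Fin (n+1)) i}

/-- The monomials `x^A x_r, …, x^A x_{n-1}` with `r = max(x^A)`. -/
def expSet (A : Fin (n+1) →₀ ℕ) : Set (Fin (n+1) →₀ ℕ) :=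
  {B | ∃ j : Fin (n+1), ((maxIdx A : ℕ)) ≤ (j : ℕ) ∧ (j : ℕ) + 1 ≤ n ∧
    B = A + Finsupp.single j 1}

/-- `x^A ≠ 1` is expandable in `I`. -/
def Expandable (I : Ideal (PR K n)) (A : Fin (n+1) →₀ ℕ) : Prop :=
  A ≠ 0 ∧ MinGen I A ∧ ∀ B ∈ rightShifts A, ¬ MinGen I B

/-- `x^A ≠ 1` is contractible in `I`. -/
def Contractible (I : Ideal (PR K n)) (A : Fin (n+1) →₀ ℕ) : Prop :=
  A ≠ 0 ∧ mon A ∉ I ∧ MinGen I (A + Finsupp.single (((n - 1 : ℕ)) : Fin (n+1)) 1) ∧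
    ∀ B ∈ leftShifts A, mon B ∈ I

/-- The expansion of `x^A` in `I`. -/
def expansionIdeal (I : Ideal (PR K n)) (A : Fin (n+1) →₀ ℕ) : Ideal (PR K n) :=
  Ideal.span ((fun B => (mon B : PR K n)) '' ((Gens I \ {A}) ∪ expSet A))

/-- The contraction of `x^A` in `I`. -/
def contractionIdeal (I : Ideal (PR K n)) (A : Fin (n+1) →₀ ℕ) : Ideal (PR K n) :=
  Ideal.span ((fun B => (mon B : PR K n)) '' ((Gens I ∪ {A}) \ expSet A))

/-- Setting `x_{n-1} = x_n = 1` in the exponent vector `A`. -/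
def stripLastTwo (A : Fin (n+1) →₀ ℕ) : Fin (n+1) →₀ ℕ :=
  Finsupp.update (Finsupp.update A (((n : ℕ)) : Fin (n+1)) 0) (((n - 1 : ℕ)) : Fin (n+1)) 0

/-- The double saturation `sat_{x_{n-1},x_n}(I)` (as an ideal of `R`). -/
def doubleSat (I : Ideal (PR K n)) : Ideal (PR K n) :=
  Ideal.span ((fun A => (mon (stripLastTwo A) : PR K n)) '' Gens I)

/-- Restriction of an exponent vector to the first `n` variables. -/
def restrictExp (A : Fin (n+1) →₀ ℕ) : Fin n →₀ ℕ :=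
  Finsupp.comapDomain Fin.castSucc A (Fin.castSucc_injective n).injOn

/-- The ideal `I · R^{(1)}` in `K[x_0,…,x_{n-1}]` (for saturated monomial `I`). -/
def restrictIdeal (I : Ideal (PR K n)) : Ideal (MvPolynomial (Fin n) K) :=
  Ideal.span ((fun A => (monomial (restrictExp A) (1 : K) : MvPolynomial (Fin n) K)) '' Gens I)

/-- Lex order on exponent vectors in `n` variables. -/
def LexGt' (A B : Fin n →₀ ℕ) : Prop :=
  ∃ i : Fin n, (∀ j : Fin n, j < i → A j = B j) ∧ B i < A i

/-- Monomial ideal in `K[x_0,…,x_{n-1}]`. -/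
def IsMonomialIdeal' (I : Ideal (MvPolynomial (Fin n) K)) : Prop :=
  ∃ S : Set (Fin n →₀ ℕ),
    I = Ideal.span ((fun A => (monomial A (1 : K) : MvPolynomial (Fin n) K)) '' S)

/-- Lexsegment ideal in `K[x_0,…,x_{n-1}]`. -/
def IsLexsegment' (I : Ideal (MvPolynomial (Fin n) K)) : Prop :=
  IsMonomialIdeal' I ∧ ∀ A B : Fin n →₀ ℕ, (∑ i, A i) = (∑ i, B i) →
    monomial B (1 : K) ∈ I → LexGt' A B → monomial A (1 : K) ∈ I

/-- `I` is almost lexsegment: saturated strongly stable with `I·R^{(1)}` lexsegment. -/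
def AlmostLex (I : Ideal (PR K n)) : Prop :=
  IsMonomialIdeal I ∧ StronglyStable I ∧ Saturated I ∧ IsLexsegment' (restrictIdeal I)

/-- A graded free resolution of the ideal `I`, with `rank i` the rank of the `i`-th
free module and `twist i k` the degrees of the standard basis elements. -/
structure GradedFreeRes (I : Ideal (PR K n)) where
  rank : ℕ → ℕ
  twist : (i : ℕ) → Fin (rank i) → ℕ
  diff : (i : ℕ) → ((Fin (rank (i+1)) → PR K n) →ₗ[PR K n] (Fin (rank i) → PR K n))
  aug : (Fin (rank 0) → PR K n) →ₗ[PR K n] PR K n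
  aug_range : LinearMap.range aug = I
  aug_graded : ∀ k, aug (Pi.single k 1) ∈ homogeneousSubmodule (Fin (n+1)) K (twist 0 k)
  diff_graded : ∀ i k l, diff i (Pi.single k 1) l = 0 ∨
    (twist i l ≤ twist (i+1) k ∧
      diff i (Pi.single k 1) l ∈ homogeneousSubmodule (Fin (n+1)) K (twist (i+1) k - twist i l))
  exact_aug : LinearMap.range (diff 0) = LinearMap.ker aug
  exact_diff : ∀ i, LinearMap.range (diff (i+1)) = LinearMap.ker (diff i)

/-- A resolution is minimal if all differential entries lie in the irrelevant ideal. -/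
def MinimalRes {I : Ideal (PR K n)} (F : GradedFreeRes I) : Prop :=
  ∀ i k l, constantCoeff (F.diff i (Pi.single k 1) l) = 0


section AuxUnique

open Classical in
lemma lexAux_trichot {A B : Fin (n+1) →₀ ℕ} (h : A ≠ B) :
    (∃ i : Fin (n+1), (∀ j, j < i → A j = B j) ∧ B i < A i) ∨
    (∃ i : Fin (n+1), (∀ j, j < i → B j = A j) ∧ A i < B i) := by
  have hne : (Finset.univ.filter (fun i => A i ≠ B i)).Nonempty := by
    by_contra h'
    apply h
    ext i
    by_contra hi
    exact h' ⟨i, Finset.mem_filter.2 ⟨Finset.mem_univ i, hi⟩⟩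
  set s := Finset.univ.filter (fun i => A i ≠ B i)
  set i₀ := s.min' hne with hi₀
  have hmem : i₀ ∈ s := s.min'_mem hne
  have hneq : A i₀ ≠ B i₀ := (Finset.mem_filter.1 hmem).2
  have hlt : ∀ j, j < i₀ → A j = B j := by
    intro j hj
    by_contra hcon
    exact absurd (s.min'_le j (Finset.mem_filter.2 ⟨Finset.mem_univ j, hcon⟩)) (not_le.2 hj)
  rcases lt_or_gt_of_ne hneq with h1 | h1
  · exact Or.inr ⟨i₀, fun j hj => (hlt j hj).symm, h1⟩
  · exact Or.inl ⟨i₀, hlt, h1⟩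

lemma mdeg_eq_degree (A : Fin (n+1) →₀ ℕ) : mdeg A = A.degree := by
  rw [mdeg, Finsupp.degree]
  exact (Finset.sum_subset (Finset.subset_univ _)
    (fun i _ hi => Finsupp.notMem_support_iff.mp hi)).symm

lemma mdeg_add (A B : Fin (n+1) →₀ ℕ) : mdeg (A + B) = mdeg A + mdeg B := by
  simp [mdeg, Finset.sum_add_distrib]

lemma mdeg_single (i : Fin (n+1)) (c : ℕ) : mdeg (Finsupp.single i c) = c := by
  simp [mdeg, Finsupp.single_apply]

lemma mon_mul_mon (A B : Fin (n+1) →₀ ℕ) : (mon A : PR K n) * mon B = mon (A + B) := by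
  simp [mon, monomial_mul]

lemma monomial_mem_of_mem_span {S : Set (Fin (n+1) →₀ ℕ)} {f : PR K n}
    (hf : f ∈ Ideal.span ((fun A => (mon A : PR K n)) '' S)) :
    ∀ A, coeff A f ≠ 0 → (mon A : PR K n) ∈ Ideal.span ((fun A => (mon A : PR K n)) '' S) := by
  classical
  set I := Ideal.span ((fun A => (mon A : PR K n)) '' S) with hI
  refine Submodule.span_induction ?_ ?_ ?_ ?_ hf
  · rintro _ ⟨B, hB, rfl⟩ A hA
    have : A = B := by
      by_contra hne
      exact hA (by simp [mon, coeff_monomial, Ne.symm hne])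
    subst this
    exact Ideal.subset_span ⟨A, hB, rfl⟩
  · intro A hA
    simp at hA
  · intro f g _ _ hf' hg' A hA
    by_cases h1 : coeff A f = 0
    · exact hg' A (by simpa [coeff_add, h1] using hA)
    · exact hf' A h1
  · intro r f _ hf' A hA
    rw [smul_eq_mul] at hA
    have hsupp : A ∈ (r * f).support := by simpa using hA
    have := MvPolynomial.support_mul r f hsupp
    rw [Finset.mem_add] at this
    obtain ⟨B, hB, C, hC, rfl⟩ := this
    have : mon C ∈ I := hf' C (by simpa using hC)
    have := Ideal.mul_mem_left I (mon B) this
    rwa [mon_mul_mon] at this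


lemma finite_deg_eq (j : ℕ) : {A : Fin (n+1) →₀ ℕ | mdeg A = j}.Finite :=
  (Finsupp.finite_of_degree_le j).subset (fun A hA => by
    rw [Set.mem_setOf_eq, ← mdeg_eq_degree, hA])

lemma finite_notin (I : Ideal (PR K n)) (j : ℕ) :
    {A : Fin (n+1) →₀ ℕ | mdeg A = j ∧ mon A ∉ I}.Finite :=
  (finite_deg_eq j).subset (fun A hA => hA.1)

lemma mon_mem_homog {A : Fin (n+1) →₀ ℕ} {j : ℕ} (h : mdeg A = j) :
    (mon A : PR K n) ∈ homogeneousSubmodule (Fin (n+1)) K j := by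
  rw [mem_homogeneousSubmodule]
  exact isHomogeneous_monomial _ (by rw [← mdeg_eq_degree, h])


lemma homog_mdeg {f : PR K n} {j : ℕ} (hf : f ∈ homogeneousSubmodule (Fin (n+1)) K j)
    {A : Fin (n+1) →₀ ℕ} (hA : coeff A f ≠ 0) : mdeg A = j := by
  rw [mem_homogeneousSubmodule] at hf
  rw [mdeg_eq_degree, Finsupp.degree_eq_weight_one]
  exact hf hA

lemma hilbF_eq_card (I : Ideal (PR K n))
    (hI : ∃ S : Set (Fin (n+1) →₀ ℕ), I = Ideal.span ((fun A => (mon A : PR K n)) '' S))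
    (j : ℕ) :
    hilbF I j = (finite_notin I j).toFinset.card := by
  classical
  obtain ⟨S, hS⟩ := hI
  set T : Finset (Fin (n+1) →₀ ℕ) := (finite_notin I j).toFinset with hT
  set φ := (Ideal.Quotient.mkₐ K I).toLinearMap with hφ
  set v : T → (PR K n) ⧸ I := fun A => φ (mon A) with hv
  have hmonI : ∀ {g : PR K n}, g ∈ I → ∀ A, coeff A g ≠ 0 → mon A ∈ I := by
    intro g hg A hA
    rw [hS] at hg ⊢
    exact monomial_mem_of_mem_span hg A hA
  have hker : ∀ {g : PR K n}, φ g = 0 → g ∈ I := by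
    intro g hg
    rwa [hφ, AlgHom.toLinearMap_apply, Ideal.Quotient.mkₐ_eq_mk,
      Ideal.Quotient.eq_zero_iff_mem] at hg
  -- the image submodule is the span of the images of the monomials not in I
  have hspan : (homogeneousSubmodule (Fin (n+1)) K j).map φ = Submodule.span K (Set.range v) := by
    apply le_antisymm
    · rintro _ ⟨f, hf, rfl⟩
      rw [← support_sum_monomial_coeff f, map_sum]
      apply Submodule.sum_mem
      intro A hA
      have hcoeff : coeff A f ≠ 0 := mem_support_iff.1 hA
      have hdeg : mdeg A = j := homog_mdeg hf hcoeff
      have : (monomial A (coeff A f) : PR K n) = coeff A f • mon A := by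
        rw [mon, smul_monomial, smul_eq_mul, mul_one]
      rw [this, map_smul]
      by_cases hmem : mon A ∈ I
      · have : φ (mon A) = 0 := by
          rw [hφ, AlgHom.toLinearMap_apply, Ideal.Quotient.mkₐ_eq_mk,
            Ideal.Quotient.eq_zero_iff_mem]
          exact hmem
        rw [this, smul_zero]
        exact Submodule.zero_mem _
      · have hAT : A ∈ T := by
          rw [hT, Set.Finite.mem_toFinset]
          exact ⟨hdeg, hmem⟩
        exact Submodule.smul_mem _ _ (Submodule.subset_span ⟨⟨A, hAT⟩, rfl⟩)
    · rw [Submodule.span_le]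
      rintro _ ⟨⟨A, hAT⟩, rfl⟩
      have hdeg : mdeg A = j := ((Set.Finite.mem_toFinset _).1 hAT).1
      exact ⟨mon A, mon_mem_homog hdeg, rfl⟩
  have hli : LinearIndependent K v := by
    rw [Fintype.linearIndependent_iff]
    intro g hg A₀
    set q : PR K n := ∑ A : T, monomial (A : Fin (n+1) →₀ ℕ) (g A) with hq
    have hφq : φ q = 0 := by
      rw [hq, map_sum, ← hg]
      apply Finset.sum_congr rfl
      intro A _
      rw [hv]
      have : (monomial (A : Fin (n+1) →₀ ℕ) (g A) : PR K n) = g A • mon A := by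
        rw [mon, smul_monomial, smul_eq_mul, mul_one]
      rw [this, map_smul]
    have hqI : q ∈ I := hker hφq
    by_contra hg0
    have hcoeff : coeff (A₀ : Fin (n+1) →₀ ℕ) q = g A₀ := by
      rw [hq, coeff_sum]
      rw [Finset.sum_eq_single A₀]
      · rw [coeff_monomial, if_pos rfl]
      · intro B _ hBA
        rw [coeff_monomial, if_neg]
        exact fun h => hBA (Subtype.ext h)
      · intro h
        exact absurd (Finset.mem_univ A₀) h
    have : mon (A₀ : Fin (n+1) →₀ ℕ) ∈ I := hmonI hqI _ (by rw [hcoeff]; exact hg0)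
    exact ((Set.Finite.mem_toFinset _).1 A₀.2).2 this
  rw [hilbF, hspan, finrank_span_eq_card hli, Fintype.card_coe]


-- descent step: if x^B · x_n ∈ L', then x^B ∈ L'
lemma descent_step {L' : Ideal (PR K n)} (hlex : IsLexsegment L') (hsat : Saturated L')
    (B : Fin (n+1) →₀ ℕ)
    (h : mon (B + Finsupp.single ((n : ℕ) : Fin (n+1)) 1) ∈ L') : mon B ∈ L' := by
  have hlast : ((n : ℕ) : Fin (n+1)) = Fin.last n := Fin.natCast_eq_last n
  have claim : ∀ i : Fin (n+1), (mon B : PR K n) * X i ∈ L' := by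
    intro i
    have hXi : (X i : PR K n) = mon (Finsupp.single i 1) := by
      rw [mon, X, monomial_eq_monomial_iff]; left; exact ⟨rfl, rfl⟩
    rw [hXi, mon_mul_mon]
    by_cases hi : i = Fin.last n
    · subst hi; rwa [← hlast]
    · -- i < last
      have hilt : i < Fin.last n := Fin.lt_last_iff_ne_last.2 hi
      apply hlex.2 (B + Finsupp.single i 1) (B + Finsupp.single ((n : ℕ) : Fin (n+1)) 1)
      · rw [mdeg_add, mdeg_add, mdeg_single, mdeg_single]
      · exact h
      · refine ⟨i, fun j hj => ?_, ?_⟩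
        · have hjne : j ≠ i := ne_of_lt hj
          have hjne' : j ≠ Fin.last n := ne_of_lt (hj.trans hilt)
          simp [Finsupp.single_apply, hlast, Ne.symm hjne, Ne.symm hjne']
        · simp [Finsupp.single_apply, hlast, hi, Ne.symm hi]
  rw [← hsat]
  rw [Submodule.mem_colon]
  intro p hp
  rw [smul_eq_mul]
  refine Submodule.span_induction ?_ ?_ ?_ ?_ hp
  · rintro _ ⟨i, rfl⟩
    exact claim i
  · rw [mul_zero]; exact L'.zero_mem
  · intro x y _ _ hx hy
    rw [mul_add]; exact L'.add_mem hx hy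
  · intro r x _ hx
    rw [smul_eq_mul, ← mul_assoc, mul_comm (mon B) r, mul_assoc]
    exact Ideal.mul_mem_left _ r hx

lemma descent {L' : Ideal (PR K n)} (hlex : IsLexsegment L') (hsat : Saturated L')
    (B : Fin (n+1) →₀ ℕ) (k : ℕ)
    (h : mon (B + Finsupp.single ((n : ℕ) : Fin (n+1)) k) ∈ L') : mon B ∈ L' := by
  induction k generalizing B with
  | zero => simpa using h
  | succ k ih =>
    apply ih
    apply descent_step hlex hsat
    rwa [add_assoc, ← Finsupp.single_add]


/-- In any fixed degree with equal Hilbert function values, two lexsegment ideals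
contain the same monomials. -/
lemma degreewise_eq {L L' : Ideal (PR K n)} (hL : IsLexsegment L) (hL' : IsLexsegment L')
    {j : ℕ} (hcard : hilbF L j = hilbF L' j) :
    ∀ A : Fin (n+1) →₀ ℕ, mdeg A = j → (mon A ∈ L ↔ mon A ∈ L') := by
  set D : Finset (Fin (n+1) →₀ ℕ) := (finite_deg_eq (n := n) j).toFinset with hD
  set NL : Finset (Fin (n+1) →₀ ℕ) := (finite_notin L j).toFinset with hNL
  set NL' : Finset (Fin (n+1) →₀ ℕ) := (finite_notin L' j).toFinset with hNL'
  have hNLD : NL ⊆ D := by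
    intro A hA
    rw [hNL, Set.Finite.mem_toFinset] at hA
    rw [hD, Set.Finite.mem_toFinset]
    exact hA.1
  have hNLD' : NL' ⊆ D := by
    intro A hA
    rw [hNL', Set.Finite.mem_toFinset] at hA
    rw [hD, Set.Finite.mem_toFinset]
    exact hA.1
  set SL : Finset (Fin (n+1) →₀ ℕ) := D \ NL with hSL
  set SL' : Finset (Fin (n+1) →₀ ℕ) := D \ NL' with hSL'
  have hmemSL : ∀ A, A ∈ SL ↔ (mdeg A = j ∧ mon A ∈ L) := by
    intro A
    rw [hSL, Finset.mem_sdiff, hD, Set.Finite.mem_toFinset, hNL, Set.Finite.mem_toFinset,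
      Set.mem_setOf_eq, Set.mem_setOf_eq]
    constructor
    · rintro ⟨h1, h2⟩
      refine ⟨h1, ?_⟩
      by_contra hc
      exact h2 ⟨h1, hc⟩
    · rintro ⟨h1, h2⟩
      exact ⟨h1, fun hc => hc.2 h2⟩
  have hmemSL' : ∀ A, A ∈ SL' ↔ (mdeg A = j ∧ (mon A : PR K n) ∈ L') := by
    intro A
    rw [hSL', Finset.mem_sdiff, hD, Set.Finite.mem_toFinset, hNL', Set.Finite.mem_toFinset,
      Set.mem_setOf_eq, Set.mem_setOf_eq]
    constructor
    · rintro ⟨h1, h2⟩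
      refine ⟨h1, ?_⟩
      by_contra hc
      exact h2 ⟨h1, hc⟩
    · rintro ⟨h1, h2⟩
      exact ⟨h1, fun hc => hc.2 h2⟩
  have hcards : SL.card = SL'.card := by
    rw [hilbF_eq_card L hL.1 j, hilbF_eq_card L' hL'.1 j] at hcard
    rw [hSL, hSL', Finset.card_sdiff_of_subset hNLD, Finset.card_sdiff_of_subset hNLD', hNL, hNL', hcard]
  have upset_sub : ∀ (S T : Finset (Fin (n+1) →₀ ℕ)),
      (∀ A B, A ∈ D → B ∈ T → LexGt A B → A ∈ T) →
      (∀ A B, A ∈ D → B ∈ S → LexGt A B → A ∈ S) →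
      S ⊆ D → T ⊆ D → S.card = T.card → S ⊆ T := by
    intro S T hTup hSup hSD hTD hc a ha
    by_contra haT
    have hsub : T ⊆ S.erase a := by
      intro b hb
      have hba : a ≠ b := fun h => haT (h ▸ hb)
      rw [Finset.mem_erase]
      rcases lexAux_trichot hba with h1 | h1
      · exact absurd (hTup a b (hSD ha) hb h1) haT
      · exact ⟨fun h => haT (h ▸ hb) |>.elim, hSup b a (hTD hb) ha h1⟩
    have h1 : T.card ≤ (S.erase a).card := Finset.card_le_card hsub
    have h2 : (S.erase a).card < S.card := Finset.card_erase_lt_of_mem ha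
    omega
  have hLup : ∀ A B, A ∈ D → B ∈ SL → LexGt A B → A ∈ SL := by
    intro A B hA hB hAB
    rw [hmemSL] at hB ⊢
    have hdA : mdeg A = j := by rw [hD, Set.Finite.mem_toFinset] at hA; exact hA
    exact ⟨hdA, hL.2 A B (by rw [hdA, hB.1]) hB.2 hAB⟩
  have hLup' : ∀ A B, A ∈ D → B ∈ SL' → LexGt A B → A ∈ SL' := by
    intro A B hA hB hAB
    rw [hmemSL'] at hB ⊢
    have hdA : mdeg A = j := by rw [hD, Set.Finite.mem_toFinset] at hA; exact hA
    exact ⟨hdA, hL'.2 A B (by rw [hdA, hB.1]) hB.2 hAB⟩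
  have hSLD : SL ⊆ D := Finset.sdiff_subset
  have hSLD' : SL' ⊆ D := Finset.sdiff_subset
  have hST : SL = SL' := by
    apply Finset.Subset.antisymm
    · exact upset_sub SL SL' hLup' hLup hSLD hSLD' hcards
    · exact upset_sub SL' SL hLup hLup' hSLD' hSLD hcards.symm
  intro A hAj
  constructor
  · intro h
    have : A ∈ SL := (hmemSL A).2 ⟨hAj, h⟩
    rw [hST, hmemSL'] at this
    exact this.2
  · intro h
    have : A ∈ SL' := (hmemSL' A).2 ⟨hAj, h⟩
    rw [← hST, hmemSL] at this
    exact this.2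


end AuxUnique

end
/-- uniqueness of the saturated lexsegment ideal with a prescribed
nonzero Hilbert polynomial. -/
theorem saturated_lexsegment_unique
    {K : Type*} [Field K] {n : ℕ} (p : Polynomial ℚ) (hp : p ≠ 0)
    (L L' : Ideal (PR K n))
    (hL1 : IsLexsegment L) (hL2 : Saturated L) (hL3 : IsHilbPoly L p)
    (hL1' : IsLexsegment L') (hL2' : Saturated L') (hL3' : IsHilbPoly L' p) :
    L = L' := by
  obtain ⟨N1, h1⟩ := hL3
  obtain ⟨N2, h2⟩ := hL3'
  set N := max N1 N2 with hN
  have hilb_eq : ∀ j, N ≤ j → hilbF L j = hilbF L' j := by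
    intro j hj
    have e1 := h1 j (le_trans (le_max_left _ _) hj)
    have e2 := h2 j (le_trans (le_max_right _ _) hj)
    exact_mod_cast e1.symm.trans e2
  have high : ∀ A : Fin (n+1) →₀ ℕ, N ≤ mdeg A → (mon A ∈ L ↔ mon A ∈ L') := by
    intro A hA
    exact degreewise_eq hL1 hL1' (hilb_eq (mdeg A) hA) A rfl
  have key : ∀ (M M' : Ideal (PR K n)), IsLexsegment M' → Saturated M' →
      (∀ A : Fin (n+1) →₀ ℕ, N ≤ mdeg A → (mon A ∈ M → mon A ∈ M')) →
      ∀ A : Fin (n+1) →₀ ℕ, mon A ∈ M → mon A ∈ M' := by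
    intro M M' hlex' hsat' hhigh A hA
    have hup : mon (A + Finsupp.single ((n : ℕ) : Fin (n+1)) N) ∈ M := by
      rw [← mon_mul_mon]
      exact Ideal.mul_mem_right _ _ hA
    have hdeg : N ≤ mdeg (A + Finsupp.single ((n : ℕ) : Fin (n+1)) N) := by
      rw [mdeg_add, mdeg_single]
      omega
    exact descent hlex' hsat' A N (hhigh _ hdeg hup)
  apply le_antisymm
  · obtain ⟨S, hS⟩ := hL1.1
    rw [hS, Ideal.span_le]
    rintro _ ⟨A, hAS, rfl⟩
    have : mon A ∈ L := hS ▸ Ideal.subset_span ⟨A, hAS, rfl⟩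
    exact key L L' hL1' hL2' (fun B hB h => (high B hB).1 h) A this
  · obtain ⟨S, hS⟩ := hL1'.1
    rw [hS, Ideal.span_le]
    rintro _ ⟨A, hAS, rfl⟩
    have : mon A ∈ L' := hS ▸ Ideal.subset_span ⟨A, hAS, rfl⟩
    exact key L' L hL1 hL2 (fun B hB h => (high B hB).2 h) A this
end

section
/- Let I ⊆ R = K[x_0,...,x_n] be a stable monomial ideal with minimal monomial generators x^{A_1},...,x^{A_r}; set l_i = max(x^{A_i}) and d_i = deg x^{A_i}. Then the Hilbert series of R/I is H_{R/I}(t) = (1 − Σ_{i=1}^r (1−t)^{l_i} t^{d_i}) / (1−t)^{n+1}. -/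
open MvPolynomial
open Fin.NatCast

/-! ### Auxiliary development for Statement 7 -/

namespace HilbAux

open Finsupp PowerSeries

variable {n : ℕ}

lemma apply_le_mdeg (C : Fin (n+1) →₀ ℕ) (t : Fin (n+1)) : C t ≤ mdeg C :=
  Finset.single_le_sum (fun _ _ => Nat.zero_le _) (Finset.mem_univ t)

lemma mdeg_add (C D : Fin (n+1) →₀ ℕ) : mdeg (C + D) = mdeg C + mdeg D := by
  simp [mdeg, Finset.sum_add_distrib]

lemma mdeg_single (t : Fin (n+1)) (c : ℕ) : mdeg (Finsupp.single t c) = c := by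
  simp [mdeg, Finsupp.single_apply]

lemma mdeg_eq_zero {C : Fin (n+1) →₀ ℕ} (h : mdeg C = 0) : C = 0 := by
  ext t
  simp only [Finsupp.coe_zero, Pi.zero_apply]
  have := apply_le_mdeg C t
  omega

/-- Finiteness of sets of exponent vectors of bounded degree. -/
lemma finite_subtype (P : (Fin (n+1) →₀ ℕ) → Prop) (m : ℕ)
    (hP : ∀ C, P C → mdeg C ≤ m) : Finite {C : Fin (n+1) →₀ ℕ // P C} := by
  refine Finite.of_injective
    (fun C => (fun t => (⟨C.1 t, Nat.lt_succ_of_le ((apply_le_mdeg C.1 t).trans (hP _ C.2))⟩ :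
      Fin (m+1)) : Fin (n+1) → Fin (m+1))) ?_
  intro C D h
  ext t
  exact congrArg Fin.val (congrFun h t)

lemma finite_set (P : (Fin (n+1) →₀ ℕ) → Prop) (m : ℕ)
    (hP : ∀ C, P C → mdeg C ≤ m) : {C : Fin (n+1) →₀ ℕ | P C}.Finite := by
  exact Set.finite_coe_iff.mp (finite_subtype P m hP)

/-- Exponent vectors supported in the window `[l, n]` of total degree `m`. -/
def W (n l m : ℕ) : Set (Fin (n+1) →₀ ℕ) :=
  {C | (∀ t ∈ C.support, l ≤ (t : ℕ)) ∧ mdeg C = m}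

lemma W_finite (l m : ℕ) : (W n l m).Finite :=
  finite_set _ m (fun _ h => le_of_eq h.2)

/-- The number of monomials of degree `m` in the variables `x_l, …, x_n`. -/
noncomputable def Ncnt (n l m : ℕ) : ℕ := (W n l m).ncard

lemma W_zero (l : ℕ) : W n l 0 = {0} := by
  ext C
  simp only [W, Set.mem_setOf_eq, Set.mem_singleton_iff]
  constructor
  · rintro ⟨-, h⟩; exact mdeg_eq_zero h
  · rintro rfl; simp [mdeg]

lemma Ncnt_zero (l : ℕ) : Ncnt n l 0 = 1 := by
  rw [Ncnt, W_zero, Set.ncard_singleton]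

lemma W_top (m : ℕ) (hm : m ≠ 0) : W n (n+1) m = ∅ := by
  ext C
  simp only [W, Set.mem_setOf_eq, Set.mem_empty_iff_false, iff_false, not_and]
  intro hwin
  have hC : C = 0 := by
    ext t
    by_contra h
    have := hwin t (Finsupp.mem_support_iff.2 h)
    omega
  rw [hC]
  simp only [mdeg, Finsupp.coe_zero, Pi.zero_apply, Finset.sum_const_zero]
  omega

lemma Ncnt_top (m : ℕ) (hm : m ≠ 0) : Ncnt n (n+1) m = 0 := by
  rw [Ncnt, W_top m hm, Set.ncard_empty]

lemma W_succ (l m : ℕ) (hl : l ≤ n) :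
    W n l (m+1) = W n (l+1) (m+1) ∪
      (fun C => C + Finsupp.single (⟨l, by omega⟩ : Fin (n+1)) 1) '' W n l m := by
  set lf : Fin (n+1) := ⟨l, by omega⟩ with hlf
  have hv : (lf : ℕ) = l := rfl
  ext C
  simp only [W, Set.mem_setOf_eq, Set.mem_union, Set.mem_image]
  constructor
  · rintro ⟨hwin, hdeg⟩
    by_cases h0 : C lf = 0
    · left
      refine ⟨fun t ht => ?_, hdeg⟩
      rcases Nat.lt_or_ge (l : ℕ) (t : ℕ) with h | h
      · omega
      · exfalso
        have h1 := hwin t ht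
        have : t = lf := Fin.ext (by omega)
        rw [this] at ht
        exact (Finsupp.mem_support_iff.1 ht) h0
    · right
      refine ⟨C - Finsupp.single lf 1, ⟨fun t ht => ?_, ?_⟩, ?_⟩
      · apply hwin
        rw [Finsupp.mem_support_iff] at ht ⊢
        simp only [Finsupp.tsub_apply] at ht
        omega
      · have hs : Finsupp.single lf 1 ≤ C := by
          intro t
          rcases eq_or_ne t lf with rfl | h
          · simpa using Nat.one_le_iff_ne_zero.2 h0
          · simp [Finsupp.single_apply, Ne.symm h]
        have := mdeg_add (C - Finsupp.single lf 1) (Finsupp.single lf 1)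
        rw [tsub_add_cancel_of_le hs, hdeg, mdeg_single] at this
        omega
      · rw [tsub_add_cancel_of_le]
        intro t
        rcases eq_or_ne t lf with rfl | h
        · simpa using Nat.one_le_iff_ne_zero.2 h0
        · simp [Finsupp.single_apply, Ne.symm h]
  · rintro (⟨hwin, hdeg⟩ | ⟨D, ⟨hwin, hdeg⟩, rfl⟩)
    · exact ⟨fun t ht => by have := hwin t ht; omega, hdeg⟩
    · refine ⟨fun t ht => ?_, by rw [mdeg_add, hdeg, mdeg_single]⟩
      have := Finsupp.support_add ht
      rcases Finset.mem_union.1 this with h | h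
      · exact hwin t h
      · have := Finsupp.support_single_subset h
        simp only [Finset.mem_singleton] at this
        subst this
        omega

lemma Ncnt_succ (l m : ℕ) (hl : l ≤ n) :
    Ncnt n l (m+1) = Ncnt n (l+1) (m+1) + Ncnt n l m := by
  have hdisj : Disjoint (W n (l+1) (m+1))
      ((fun C => C + Finsupp.single (⟨l, by omega⟩ : Fin (n+1)) 1) '' W n l m) := by
    refine Set.disjoint_left.2 ?_
    rintro C ⟨hwin, -⟩ ⟨D, -, rfl⟩
    have := hwin ⟨l, by omega⟩ (by simp)
    simp at this
  rw [Ncnt, W_succ l m hl, Set.ncard_union_eq hdisj (W_finite _ _) ((W_finite _ _).image _),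
    Ncnt, Ncnt, Set.ncard_image_of_injective _ (add_left_injective _)]

/-! ### Generating function of window counts -/

lemma mkNcnt_step (l : ℕ) (hl : l ≤ n) :
    (1 - PowerSeries.X : PowerSeries ℚ) * PowerSeries.mk (fun m => (Ncnt n l m : ℚ))
      = PowerSeries.mk (fun m => (Ncnt n (l+1) m : ℚ)) := by
  ext j
  rw [sub_mul, one_mul, map_sub, coeff_mk]
  cases j with
  | zero => simp [PowerSeries.coeff_zero_X_mul, Ncnt_zero]
  | succ j =>
    rw [PowerSeries.coeff_succ_X_mul, coeff_mk, coeff_mk]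
    have := Ncnt_succ l j hl
    push_cast [this]
    ring

lemma Wser (k : ℕ) (hk : k ≤ n+1) :
    (1 - PowerSeries.X : PowerSeries ℚ) ^ k *
      PowerSeries.mk (fun m => (Ncnt n (n+1-k) m : ℚ)) = 1 := by
  induction k with
  | zero =>
    rw [pow_zero, one_mul]
    ext j
    cases j with
    | zero => simp [Ncnt_zero]
    | succ j => simp [Nat.add_sub_cancel_left, Ncnt_top (j+1) (Nat.succ_ne_zero j),
        PowerSeries.coeff_one]
  | succ k ih =>
    have h1 : n+1-(k+1)+1 = n+1-k := by omega
    have h2 : n+1-(k+1) ≤ n := by omega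
    calc (1 - PowerSeries.X : PowerSeries ℚ) ^ (k+1) *
          PowerSeries.mk (fun m => (Ncnt n (n+1-(k+1)) m : ℚ))
        = (1 - PowerSeries.X) ^ k * ((1 - PowerSeries.X) *
            PowerSeries.mk (fun m => (Ncnt n (n+1-(k+1)) m : ℚ))) := by ring
      _ = 1 := by rw [mkNcnt_step _ h2, h1]; exact ih (by omega)

/-! ### `maxIdx` lemmas -/

lemma le_maxIdx {A : Fin (n+1) →₀ ℕ} {t : Fin (n+1)} (ht : t ∈ A.support) :
    t ≤ maxIdx A := by
  rcases Finset.max_of_mem ht with ⟨m, hm⟩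
  have h1 : (t : WithBot (Fin (n+1))) ≤ A.support.max := Finset.le_max ht
  rw [hm] at h1
  rw [maxIdx, hm]
  exact_mod_cast h1

lemma apply_eq_zero_of_maxIdx_lt {A : Fin (n+1) →₀ ℕ} {t : Fin (n+1)}
    (h : maxIdx A < t) : A t = 0 := by
  by_contra h0
  exact absurd (le_maxIdx (Finsupp.mem_support_iff.2 h0)) (not_le.2 h)

lemma maxIdx_mem {A : Fin (n+1) →₀ ℕ} (h : A ≠ 0) : maxIdx A ∈ A.support := by
  rcases Finset.max_of_nonempty (Finsupp.support_nonempty_iff.2 h) with ⟨m, hm⟩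
  rw [maxIdx, hm]
  exact Finset.mem_of_max hm

lemma maxIdx_le_of_le {A B : Fin (n+1) →₀ ℕ} (h : A ≤ B) : maxIdx A ≤ maxIdx B := by
  by_cases hA : A = 0
  · subst hA
    simp only [maxIdx, Finsupp.support_zero, Finset.max_empty, WithBot.unbotD_bot]
    exact Fin.zero_le _
  · exact le_maxIdx (Finsupp.support_mono h (maxIdx_mem hA))

lemma mdeg_le_of_le {C B : Fin (n+1) →₀ ℕ} (h : C ≤ B) : mdeg C ≤ mdeg B :=
  Finset.sum_le_sum fun s _ => Finsupp.le_def.mp h s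

/-! ### Monomial ideal membership and Eliahou–Kervaire decomposition -/

section EK

variable {K : Type*} [Field K] (I : Ideal (PR K n))

lemma mon_mem_span_iff {r : ℕ} (A : Fin r → (Fin (n+1) →₀ ℕ)) (B : Fin (n+1) →₀ ℕ) :
    (mon B : PR K n) ∈ Ideal.span (Set.range fun i => (mon (A i) : PR K n)) ↔
      ∃ i, A i ≤ B := by
  have h : (Set.range fun i => (mon (A i) : PR K n))
      = (fun s => MvPolynomial.monomial s (1:K)) '' Set.range A := by
    rw [← Set.range_comp]; rfl
  rw [mon, h, MvPolynomial.mem_ideal_span_monomial_image]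
  simp [MvPolynomial.support_monomial]

lemma mon_add_mem {C : Fin (n+1) →₀ ℕ} (h : (mon C : PR K n) ∈ I)
    (E : Fin (n+1) →₀ ℕ) : (mon (C + E) : PR K n) ∈ I := by
  have heq : (mon (C+E) : PR K n) = mon E * mon C := by
    rw [mon, mon, mon, MvPolynomial.monomial_mul, one_mul]
    exact congrArg (fun D => MvPolynomial.monomial D (1:K)) (add_comm C E)
  rw [heq]
  exact I.mul_mem_left _ h

lemma step1 (hstab : Stable I) {C : Fin (n+1) →₀ ℕ} (hC : (mon C : PR K n) ∈ I)
    (t : Fin (n+1)) :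
    (mon (C + Finsupp.single t 1
      - Finsupp.single (maxIdx (C + Finsupp.single t 1)) 1) : PR K n) ∈ I := by
  set B := C + Finsupp.single t 1 with hB
  set m := maxIdx B with hm
  by_cases htm : t = m
  · have : B - Finsupp.single m 1 = C := by rw [← htm, hB, add_tsub_cancel_right]
    rw [this]; exact hC
  · have hBt : t ∈ B.support := Finsupp.mem_support_iff.2 (by simp [hB])
    have htm' : t < m := lt_of_le_of_ne (le_maxIdx hBt) htm
    have hB0 : B ≠ 0 := fun h => by rw [h] at hBt; simp at hBt
    have hmB : m ∈ B.support := maxIdx_mem hB0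
    have hCm : C m ≠ 0 := by
      have hB' : B m ≠ 0 := Finsupp.mem_support_iff.1 hmB
      have hBm : B m = C m := by
        rw [hB]
        simp [Finsupp.single_apply, htm]
      rwa [hBm] at hB'
    have hC0 : C ≠ 0 := fun h => hCm (by rw [h]; simp)
    have hmC : maxIdx C = m := le_antisymm
      (maxIdx_le_of_le (self_le_add_right C _))
      (le_maxIdx (Finsupp.mem_support_iff.2 hCm))
    have hres := hstab C hC0 hC t (by rw [hmC]; exact htm')
    have heq : shiftM C t (maxIdx C) = B - Finsupp.single m 1 := by rw [hmC]; rfl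
    rwa [heq] at hres

lemma stepdown (hstab : Stable I) (k : ℕ) :
    ∀ (C B : Fin (n+1) →₀ ℕ), mdeg B - mdeg C = k →
      (mon C : PR K n) ∈ I → C ≤ B → C ≠ B →
      (mon (B - Finsupp.single (maxIdx B) 1) : PR K n) ∈ I := by
  induction k using Nat.strong_induction_on with
  | _ k ih =>
    intro C B hk hC hle hne
    obtain ⟨t, ht⟩ : ∃ t, C t < B t := by
      by_contra h
      push_neg at h
      exact hne (le_antisymm hle (Finsupp.le_def.mpr h))
    set C' := C + Finsupp.single t 1 with hC'def
    have hC'le : C' ≤ B := by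
      rw [Finsupp.le_def]
      intro s
      rcases eq_or_ne s t with rfl | h
      · simp only [hC'def, Finsupp.add_apply, Finsupp.single_eq_same]
        omega
      · simpa [hC'def, Finsupp.single_apply, Ne.symm h] using Finsupp.le_def.mp hle s
    have hC'I : (mon C' : PR K n) ∈ I := mon_add_mem I hC _
    by_cases hEq : C' = B
    · have := step1 I hstab hC t
      rwa [← hC'def, hEq] at this
    · have hdlt : mdeg C < mdeg B :=
        Finset.sum_lt_sum (fun s _ => Finsupp.le_def.mp hle s) ⟨t, Finset.mem_univ t, ht⟩
      have hd' : mdeg C' = mdeg C + 1 := by rw [hC'def, mdeg_add, mdeg_single]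
      have hdle : mdeg C' ≤ mdeg B := mdeg_le_of_le hC'le
      exact ih (mdeg B - mdeg C') (by omega) C' B rfl hC'I hC'le hEq

variable {r : ℕ} {A : Fin r → (Fin (n+1) →₀ ℕ)}

lemma exists_decomp (hstab : Stable I)
    (hspan : I = Ideal.span (Set.range fun i => (mon (A i) : PR K n))) (j : ℕ) :
    ∀ B : Fin (n+1) →₀ ℕ, mdeg B = j → (mon B : PR K n) ∈ I →
      ∃ i C, (∀ t ∈ C.support, maxIdx (A i) ≤ t) ∧ B = A i + C := by
  induction j using Nat.strong_induction_on with
  | _ j ih =>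
    intro B hdeg hB
    have hcrit : ∃ i, A i ≤ B := (mon_mem_span_iff A B).1 (hspan ▸ hB)
    by_cases hB0 : B = 0
    · obtain ⟨i, hi⟩ := hcrit
      have hAi : A i = 0 := le_antisymm (hB0 ▸ hi) zero_le
      exact ⟨i, 0, by simp, by rw [hB0, hAi, add_zero]⟩
    · set m := maxIdx B with hm
      by_cases h : (mon (B - Finsupp.single m 1) : PR K n) ∈ I
      · have hmB : m ∈ B.support := maxIdx_mem hB0
        have hsub : Finsupp.single m 1 ≤ B := by
          rw [Finsupp.le_def]
          intro s
          rcases eq_or_ne s m with rfl | hs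
          · simpa using Nat.one_le_iff_ne_zero.2 (Finsupp.mem_support_iff.1 hmB)
          · simp [Finsupp.single_apply, Ne.symm hs]
        have hrec : B - Finsupp.single m 1 + Finsupp.single m 1 = B :=
          tsub_add_cancel_of_le hsub
        have hdeg' : mdeg (B - Finsupp.single m 1) + 1 = j := by
          have h2 := mdeg_add (B - Finsupp.single m 1) (Finsupp.single m 1)
          rw [hrec, mdeg_single] at h2
          omega
        obtain ⟨i, C, hwin, hBC⟩ := ih (j-1) (by omega) (B - Finsupp.single m 1)
          (by omega) h
        refine ⟨i, C + Finsupp.single m 1, ?_, ?_⟩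
        · intro t ht
          rcases Finset.mem_union.1 (Finsupp.support_add ht) with h1 | h1
          · exact hwin t h1
          · have h2 := Finsupp.support_single_subset h1
            simp only [Finset.mem_singleton] at h2
            subst h2
            have h3 : A i ≤ B := le_trans (hBC ▸ self_le_add_right _ _) tsub_le_self
            exact maxIdx_le_of_le h3
        · rw [← hrec, hBC, add_assoc]
      · obtain ⟨i, hi⟩ := hcrit
        rcases eq_or_ne (A i) B with hEq | hne
        · exact ⟨i, 0, by simp, by rw [← hEq, add_zero]⟩
        · have hAiI : (mon (A i) : PR K n) ∈ I := by
            rw [hspan]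
            exact (mon_mem_span_iff A (A i)).2 ⟨i, le_rfl⟩
          exact absurd (stepdown I hstab _ (A i) B rfl hAiI hi hne) h

lemma le_of_decomp {i i' : Fin r} {C C' : Fin (n+1) →₀ ℕ}
    (heq : A i + C = A i' + C')
    (hw : ∀ t ∈ C.support, maxIdx (A i) ≤ t)
    (hw' : ∀ t ∈ C'.support, maxIdx (A i') ≤ t)
    (hle : maxIdx (A i) ≤ maxIdx (A i'))
    (hle2 : maxIdx (A i) = maxIdx (A i') →
      A i (maxIdx (A i)) ≤ A i' (maxIdx (A i))) :
    A i ≤ A i' := by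
  rw [Finsupp.le_def]
  intro t
  rcases lt_trichotomy t (maxIdx (A i)) with h | h | h
  · have hC : C t = 0 := by
      by_contra h0
      exact absurd (hw t (Finsupp.mem_support_iff.2 h0)) (not_le.2 h)
    have hC' : C' t = 0 := by
      by_contra h0
      exact absurd (hw' t (Finsupp.mem_support_iff.2 h0))
        (not_le.2 (lt_of_lt_of_le h hle))
    have happ := DFunLike.congr_fun heq t
    simp only [Finsupp.add_apply, hC, hC', add_zero] at happ
    exact le_of_eq happ
  · rcases lt_or_eq_of_le hle with hlt | heqU
    · have hC' : C' t = 0 := by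
        by_contra h0
        have := hw' t (Finsupp.mem_support_iff.2 h0)
        rw [h] at this
        exact absurd hlt (not_lt.2 this)
      have happ := DFunLike.congr_fun heq t
      simp only [Finsupp.add_apply, hC', add_zero] at happ
      omega
    · rw [h]
      exact hle2 heqU
  · rw [apply_eq_zero_of_maxIdx_lt h]
    exact Nat.zero_le _

lemma decomp_eq (hgen : ∀ i, MinGen I (A i)) (hinj : Function.Injective A)
    {i i' : Fin r} {C C' : Fin (n+1) →₀ ℕ}
    (heq : A i + C = A i' + C')
    (hw : ∀ t ∈ C.support, maxIdx (A i) ≤ t)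
    (hw' : ∀ t ∈ C'.support, maxIdx (A i') ≤ t) :
    i = i' ∧ C = C' := by
  have key : A i ≤ A i' ∨ A i' ≤ A i := by
    rcases lt_trichotomy (maxIdx (A i)) (maxIdx (A i')) with h | h | h
    · exact Or.inl (le_of_decomp heq hw hw' h.le (fun he => absurd he (ne_of_lt h)))
    · rcases le_total (A i (maxIdx (A i))) (A i' (maxIdx (A i))) with h2 | h2
      · exact Or.inl (le_of_decomp heq hw hw' h.le (fun _ => h2))
      · refine Or.inr (le_of_decomp heq.symm hw' hw h.ge (fun _ => ?_))
        rw [← h]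
        exact h2
    · exact Or.inr (le_of_decomp heq.symm hw' hw h.le (fun he => absurd he (ne_of_lt h)))
  have hAA : A i = A i' := by
    rcases key with h | h
    · by_contra hne
      exact ((hgen i').2 (A i) h hne) ((hgen i).1)
    · by_contra hne
      exact ((hgen i).2 (A i') h (fun e => hne e.symm)) ((hgen i').1)
  have hii : i = i' := hinj hAA
  subst hii
  exact ⟨rfl, by
    have := heq
    rwa [add_right_inj] at this⟩

end EK

/-! ### Counting monomials in `I` by degree -/

lemma nat_card_sigma {ι : Type*} [Fintype ι] (f : ι → Type*) [∀ i, Finite (f i)] :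
    Nat.card (Σ i, f i) = ∑ i, Nat.card (f i) := by
  letI := fun i => Fintype.ofFinite (f i)
  simp [Nat.card_eq_fintype_card]

section Count

variable {K : Type*} [Field K] (I : Ideal (PR K n)) {r : ℕ}
  {A : Fin r → (Fin (n+1) →₀ ℕ)}

lemma card_SI (hstab : Stable I) (hgen : ∀ i, MinGen I (A i))
    (hinj : Function.Injective A)
    (hspan : I = Ideal.span (Set.range fun i => (mon (A i) : PR K n))) (j : ℕ) :
    {B : Fin (n+1) →₀ ℕ | mdeg B = j ∧ ∃ i, A i ≤ B}.ncard
      = ∑ i : Fin r,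
          (if mdeg (A i) ≤ j then Ncnt n (maxIdx (A i) : ℕ) (j - mdeg (A i)) else 0) := by
  classical
  set T := fun i : Fin r => {C : Fin (n+1) →₀ ℕ //
    (∀ t ∈ C.support, maxIdx (A i) ≤ t) ∧ mdeg (A i) + mdeg C = j} with hT
  haveI hfin : ∀ i, Finite (T i) := fun i => finite_subtype _ j (fun C hC => by omega)
  have hbij : Function.Bijective (fun p : Σ i, T i =>
      (⟨A p.1 + p.2.1, by rw [mdeg_add]; exact p.2.2.2, ⟨p.1, self_le_add_right _ _⟩⟩ :
        {B : Fin (n+1) →₀ ℕ // mdeg B = j ∧ ∃ i, A i ≤ B})) := by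
    constructor
    · rintro ⟨i, C, hC⟩ ⟨i', C', hC'⟩ h
      simp only [Subtype.mk.injEq] at h
      obtain ⟨h1, h2⟩ := decomp_eq I hgen hinj h hC.1 hC'.1
      subst h1
      subst h2
      rfl
    · rintro ⟨B, hdeg, hex⟩
      have hBI : (mon B : PR K n) ∈ I := by
        rw [hspan]
        exact (mon_mem_span_iff A B).2 hex
      obtain ⟨i, C, hwin, hBC⟩ := exists_decomp I hstab hspan j B hdeg hBI
      refine ⟨⟨i, C, hwin, ?_⟩, ?_⟩
      · rw [← mdeg_add, ← hBC, hdeg]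
      · exact Subtype.ext hBC.symm
  have h1 : {B : Fin (n+1) →₀ ℕ | mdeg B = j ∧ ∃ i, A i ≤ B}.ncard
      = Nat.card (Σ i, T i) := by
    rw [← Nat.card_coe_set_eq]
    exact (Nat.card_eq_of_bijective _ hbij).symm
  rw [h1, nat_card_sigma]
  refine Finset.sum_congr rfl fun i _ => ?_
  by_cases hd : mdeg (A i) ≤ j
  · rw [if_pos hd]
    have e : T i ≃ ↥(W n (maxIdx (A i) : ℕ) (j - mdeg (A i))) := by
      refine Equiv.subtypeEquivRight fun C => ?_
      constructor
      · rintro ⟨hwin, hdeg⟩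
        exact ⟨fun t ht => Fin.le_def.mp (hwin t ht), by omega⟩
      · rintro ⟨hwin, hdeg⟩
        exact ⟨fun t ht => Fin.le_def.mpr (hwin t ht), by omega⟩
    rw [Nat.card_congr e, Nat.card_coe_set_eq]
    rfl
  · rw [if_neg hd]
    haveI : IsEmpty (T i) := ⟨fun C => hd (by have := C.2.2; omega)⟩
    exact Nat.card_of_isEmpty

end Count

/-! ### The Hilbert function via monomial counting -/

section Hilb

variable {K : Type*} [Field K] (I : Ideal (PR K n)) {r : ℕ}
  {A : Fin r → (Fin (n+1) →₀ ℕ)}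

lemma poly_mem_span_iff (A : Fin r → (Fin (n+1) →₀ ℕ)) (x : PR K n) :
    x ∈ Ideal.span (Set.range fun i => (mon (A i) : PR K n)) ↔
      ∀ d ∈ x.support, ∃ i, A i ≤ d := by
  have h : (Set.range fun i => (mon (A i) : PR K n))
      = (fun s => MvPolynomial.monomial s (1:K)) '' Set.range A := by
    rw [← Set.range_comp]; rfl
  rw [h, MvPolynomial.mem_ideal_span_monomial_image]
  simp

lemma degree_eq_mdeg (d : Fin (n+1) →₀ ℕ) : d.degree = mdeg d :=
  Finset.sum_subset (Finset.subset_univ _)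
    (fun x _ hx => Finsupp.notMem_support_iff.1 hx)

lemma finrank_restrictSupport (s : Set (Fin (n+1) →₀ ℕ)) (hs : s.Finite) :
    Module.finrank K (MvPolynomial.restrictSupport K s) = s.ncard := by
  rw [Module.finrank_eq_nat_card_basis (MvPolynomial.basisRestrictSupport K s),
    Nat.card_coe_set_eq]

set_option synthInstance.maxHeartbeats 1000000 in
set_option maxHeartbeats 1000000 in
lemma hilbF_count
    (hspan : I = Ideal.span (Set.range fun i => (mon (A i) : PR K n))) (j : ℕ) :
    hilbF I j + {B : Fin (n+1) →₀ ℕ | mdeg B = j ∧ ∃ i, A i ≤ B}.ncard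
      = Ncnt n 0 j := by
  classical
  set U : Set (Fin (n+1) →₀ ℕ) := {d | mdeg d = j} with hU
  set Ts : Set (Fin (n+1) →₀ ℕ) := {d | mdeg d = j ∧ ∃ i, A i ≤ d} with hTs
  have hUfin : U.Finite := finite_set _ j (fun C hC => le_of_eq hC)
  have hTfin : Ts.Finite := finite_set _ j (fun C hC => le_of_eq hC.1)
  set p : Submodule K (PR K n) := MvPolynomial.homogeneousSubmodule (Fin (n+1)) K j with hp
  have hpU : p = MvPolynomial.restrictSupport K U := by
    rw [hp, MvPolynomial.homogeneousSubmodule_eq_finsupp_supported]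
    have : {d : Fin (n+1) →₀ ℕ | d.degree = j} = U := by
      ext d
      simp [hU, degree_eq_mdeg]
    rw [← this]
    rfl
  set f := (Ideal.Quotient.mkₐ K I).toLinearMap with hf
  set g := f.comp p.subtype with hg
  -- the Hilbert function is the rank of the range of `g`
  have hmap : (MvPolynomial.homogeneousSubmodule (Fin (n+1)) K j).map f
      = LinearMap.range g := by
    rw [hg, LinearMap.range_comp, Submodule.range_subtype]
  -- compute the kernel of `g`
  set Q : Submodule K (PR K n) := MvPolynomial.restrictSupport K Ts with hQ
  have hQle : Q ≤ p := by
    rw [hpU]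
    exact MvPolynomial.restrictSupport_mono (R := K) (fun d hd => hd.1)
  have hker : LinearMap.ker g = Submodule.comap p.subtype Q := by
    rw [hg, LinearMap.ker_comp]
    ext x
    obtain ⟨x, hx⟩ := x
    have hxU : ∀ d ∈ x.support, mdeg d = j := by
      intro d hd
      have := hpU ▸ hx
      exact (MvPolynomial.mem_restrictSupport_iff K).1 this hd
    simp only [Submodule.mem_comap, Submodule.subtype_apply, LinearMap.mem_ker]
    rw [hQ]
    have hker0 : (f x = 0) ↔ x ∈ I := by
      rw [hf]
      exact Ideal.Quotient.eq_zero_iff_mem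
    rw [hker0, hspan, poly_mem_span_iff]
    constructor
    · intro h
      refine (MvPolynomial.mem_restrictSupport_iff K).2 fun d hd => ?_
      exact ⟨hxU d hd, h d hd⟩
    · intro h d hd
      exact ((MvPolynomial.mem_restrictSupport_iff K).1 h hd).2
  -- finite dimensionality
  haveI hUfin' : Fintype U := hUfin.fintype
  haveI : Module.Finite K p := by
    rw [hpU]
    exact Module.Finite.of_basis (MvPolynomial.basisRestrictSupport K U)
  -- rank-nullity
  have hrn := LinearMap.finrank_range_add_finrank_ker g
  have h1 : Module.finrank K (LinearMap.range g) = hilbF I j := by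
    rw [← hmap]
    rfl
  have h2 : Module.finrank K (LinearMap.ker g) = Ts.ncard := by
    rw [hker, (Submodule.comapSubtypeEquivOfLe hQle).finrank_eq]
    exact finrank_restrictSupport _ hTfin
  have h3 : Module.finrank K p = Ncnt n 0 j := by
    rw [hpU, finrank_restrictSupport _ hUfin]
    have : W n 0 j = U := by
      ext C
      simp [W, hU]
    rw [Ncnt, this]
  rw [h1, h2, h3] at hrn
  exact hrn

end Hilb

end HilbAux

/-- the Hilbert series of a stable monomial ideal:
`(1−t)^{n+1} · H_{R/I}(t) = 1 − Σ_i (1−t)^{l_i} t^{d_i}`. -/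
theorem hilbSeries_of_stable
    {K : Type*} [Field K] {n : ℕ} (I : Ideal (PR K n))
    (hmono : IsMonomialIdeal I) (hstab : Stable I)
    (r : ℕ) (A : Fin r → (Fin (n+1) →₀ ℕ)) (hinj : Function.Injective A)
    (hspan : I = Ideal.span (Set.range fun i => (mon (A i) : PR K n)))
    (hgen : ∀ i, MinGen I (A i)) :
    (1 - PowerSeries.X : PowerSeries ℚ) ^ (n+1) *
        PowerSeries.mk (fun j => (hilbF I j : ℚ))
      = 1 - ∑ i : Fin r,
          (1 - PowerSeries.X : PowerSeries ℚ) ^ ((maxIdx (A i) : ℕ)) *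
            (PowerSeries.X : PowerSeries ℚ) ^ (mdeg (A i)) := by
  classical
  have hcount := fun j => HilbAux.hilbF_count I hspan j
  have hSI := fun j => HilbAux.card_SI I hstab hgen hinj hspan j
  have hmk : PowerSeries.mk (fun j => (hilbF I j : ℚ))
      = PowerSeries.mk (fun j => (HilbAux.Ncnt n 0 j : ℚ))
        - PowerSeries.mk (fun j => ((∑ i : Fin r,
            if mdeg (A i) ≤ j then HilbAux.Ncnt n (maxIdx (A i) : ℕ) (j - mdeg (A i))
            else 0 : ℕ) : ℚ)) := by
    ext j
    rw [map_sub, PowerSeries.coeff_mk, PowerSeries.coeff_mk, PowerSeries.coeff_mk]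
    have h1 := hcount j
    rw [hSI j] at h1
    have h2 : ((hilbF I j : ℚ)) + ((∑ i : Fin r,
        if mdeg (A i) ≤ j then HilbAux.Ncnt n (maxIdx (A i) : ℕ) (j - mdeg (A i))
        else 0 : ℕ) : ℚ) = ((HilbAux.Ncnt n 0 j : ℚ)) := by
      exact_mod_cast congrArg (fun x : ℕ => (x : ℚ)) h1
    linarith
  rw [hmk, mul_sub]
  have htot : (1 - PowerSeries.X : PowerSeries ℚ) ^ (n+1) *
      PowerSeries.mk (fun j => (HilbAux.Ncnt n 0 j : ℚ)) = 1 := by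
    have h := HilbAux.Wser (n := n) (n+1) le_rfl
    simpa using h
  have hI : PowerSeries.mk (fun j => ((∑ i : Fin r,
        if mdeg (A i) ≤ j then HilbAux.Ncnt n (maxIdx (A i) : ℕ) (j - mdeg (A i))
        else 0 : ℕ) : ℚ))
      = ∑ i : Fin r, (PowerSeries.X : PowerSeries ℚ) ^ (mdeg (A i)) *
          PowerSeries.mk (fun m => (HilbAux.Ncnt n (maxIdx (A i) : ℕ) m : ℚ)) := by
    ext j
    rw [PowerSeries.coeff_mk, map_sum]
    push_cast
    refine Finset.sum_congr rfl fun i _ => ?_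
    rw [PowerSeries.coeff_X_pow_mul']
    split_ifs with h
    · rw [PowerSeries.coeff_mk]
    · rfl
  rw [htot, hI, Finset.mul_sum]
  congr 1
  refine Finset.sum_congr rfl fun i _ => ?_
  have hl : (maxIdx (A i) : ℕ) ≤ n := Nat.lt_succ_iff.mp (Fin.is_lt _)
  have hsplit : (1 - PowerSeries.X : PowerSeries ℚ) ^ (n+1)
      = (1 - PowerSeries.X) ^ ((maxIdx (A i) : ℕ)) *
        (1 - PowerSeries.X) ^ (n+1-(maxIdx (A i) : ℕ)) := by
    rw [← pow_add]
    congr 1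
    omega
  have hw := HilbAux.Wser (n := n) (n+1 - (maxIdx (A i) : ℕ)) (by omega)
  have hln : n+1-(n+1-(maxIdx (A i) : ℕ)) = (maxIdx (A i) : ℕ) := by omega
  rw [hln] at hw
  calc (1 - PowerSeries.X : PowerSeries ℚ) ^ (n+1) *
        ((PowerSeries.X : PowerSeries ℚ) ^ (mdeg (A i)) *
          PowerSeries.mk (fun m => (HilbAux.Ncnt n (maxIdx (A i) : ℕ) m : ℚ)))
      = ((1 - PowerSeries.X) ^ ((maxIdx (A i) : ℕ)) *
          (PowerSeries.X : PowerSeries ℚ) ^ (mdeg (A i))) *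
        ((1 - PowerSeries.X) ^ (n+1-(maxIdx (A i) : ℕ)) *
          PowerSeries.mk (fun m => (HilbAux.Ncnt n (maxIdx (A i) : ℕ) m : ℚ))) := by
        rw [hsplit]; ring
    _ = (1 - PowerSeries.X) ^ ((maxIdx (A i) : ℕ)) *
          (PowerSeries.X : PowerSeries ℚ) ^ (mdeg (A i)) := by rw [hw, mul_one]
end
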